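/- Let (x_n) ⊆ C([0,T];ℝ^d) converge uniformly to x ∈ C([0,T];ℝ^d), and let (η_n) be continuous functions of bounded variation on [0,T] converging uniformly to η, with M := sup_n ‖η_n‖_BV < ∞. Then the functions t ↦ ∫_0^t ⟨x_n(s), dη_n(s)⟩ converge uniformly on [0,T] to t ↦ ∫_0^t ⟨x(s), dη(s)⟩, where the integrals are Lebesgue–Stieltjes integrals. -/

import Mathlib

set_option maxHeartbeats 1000000


open MeasureTheory Set Filter Topology
open scoped ENNReal Classical
open Function

noncomputable section

/-- The Lebesgue–Stieltjes measure associated to a monotone function (zero measure otherwise). -/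
def lsMeasure (f : ℝ → ℝ) : Measure ℝ :=
  if h : Monotone f then h.stieltjesFunction.measure else 0

/-- Total variation of `η` on `[0, min (max t 0) T]`, as a real number. -/
def varFun (T : ℝ) (η : ℝ → ℝ) (t : ℝ) : ℝ :=
  (eVariationOn η (Icc 0 (min (max t 0) T))).toReal

/-- `η` clamped to its values on `[0,T]`. -/
def clampFun (T : ℝ) (η : ℝ → ℝ) (t : ℝ) : ℝ := η (min (max t 0) T)

/-- The Lebesgue–Stieltjes integral `∫_0^t x dη` of a scalar function `x` against a
(right-continuous) function `η` of bounded variation on `[0,T]`, defined through the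
Jordan decomposition `η = (v + η) - v` where `v` is the variation function of `η`. -/
def stieltjesIntegral1 (T : ℝ) (x : ℝ → ℝ) (η : ℝ → ℝ) (t : ℝ) : ℝ :=
  (∫ s in Ioc 0 t, x s ∂(lsMeasure (fun u => varFun T η u + clampFun T η u))) -
    ∫ s in Ioc 0 t, x s ∂(lsMeasure (varFun T η))

/-- The coordinatewise Lebesgue–Stieltjes integral `∫_0^t ⟨x(s), dη(s)⟩` for
`ℝ^d`-valued `x` and `η`. -/
def stieltjesIntegral (T : ℝ) {d : ℕ} (x η : ℝ → EuclideanSpace ℝ (Fin d)) (t : ℝ) : ℝ :=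
  ∑ i, stieltjesIntegral1 T (fun s => x s i) (fun s => η s i) t

/-- The BV norm `‖η‖_BV = |η(0)| + V_0^T(η)`. -/
def bvNorm (T : ℝ) {E : Type*} [NormedAddCommGroup E] (η : ℝ → E) : ℝ :=
  ‖η 0‖ + (eVariationOn η (Icc 0 T)).toReal


section Clamp
variable {T : ℝ}

lemma cl_mem (hT : 0 ≤ T) (t : ℝ) : min (max t 0) T ∈ Icc 0 T :=
  ⟨le_min (le_max_right _ _) hT, min_le_right _ _⟩

lemma cl_mono : Monotone (fun t : ℝ => min (max t 0) T) :=
  fun _ _ h => min_le_min (max_le_max h le_rfl) le_rfl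

lemma cl_cont : Continuous (fun t : ℝ => min (max t 0) T) :=
  (continuous_id.max continuous_const).min continuous_const

lemma cl_eq_self {t : ℝ} (ht : t ∈ Icc 0 T) : min (max t 0) T = t := by
  rw [max_eq_left ht.1, min_eq_left ht.2]

lemma cl_zero (hT : 0 ≤ T) : min (max (0:ℝ) 0) T = 0 := by simp [hT]

lemma cl_top {t : ℝ} (hT : 0 ≤ T) (ht : T ≤ t) : min (max t 0) T = T := by
  rw [max_eq_left (hT.trans ht), min_eq_right ht]

end Clamp

section Scalar
variable {T : ℝ} {η : ℝ → ℝ}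

lemma evar_fin (hT : 0 ≤ T) (hbv : BoundedVariationOn η (Icc 0 T)) {a b : ℝ}
    (ha : a ∈ Icc 0 T) (hb : b ∈ Icc 0 T) : eVariationOn η (Icc a b) ≠ ⊤ :=
  ne_top_of_le_ne_top hbv (eVariationOn.mono η (Icc_subset_Icc ha.1 hb.2))

lemma varFun_zero (hT : 0 ≤ T) : varFun T η 0 = 0 := by
  rw [varFun, cl_zero hT]
  have : eVariationOn η (Icc (0:ℝ) 0) = 0 := by
    apply eVariationOn.subsingleton
    rw [Set.Icc_self]; exact Set.subsingleton_singleton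
  simp [this]

lemma varFun_nonneg (t : ℝ) : 0 ≤ varFun T η t := ENNReal.toReal_nonneg

lemma varFun_le (hT : 0 ≤ T) (hbv : BoundedVariationOn η (Icc 0 T)) (t : ℝ) :
    varFun T η t ≤ (eVariationOn η (Icc 0 T)).toReal :=
  ENNReal.toReal_mono hbv (eVariationOn.mono η (Icc_subset_Icc le_rfl (cl_mem hT t).2))

lemma varFun_mono (hT : 0 ≤ T) (hbv : BoundedVariationOn η (Icc 0 T)) :
    Monotone (varFun T η) := by
  intro a b hab
  exact ENNReal.toReal_mono
    (ne_top_of_le_ne_top hbv (eVariationOn.mono η (Icc_subset_Icc le_rfl (cl_mem hT b).2)))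
    (eVariationOn.mono η (Icc_subset_Icc le_rfl (cl_mono hab)))

lemma varFun_add (hT : 0 ≤ T) (hbv : BoundedVariationOn η (Icc 0 T)) {a b : ℝ} (hab : a ≤ b) :
    varFun T η b = varFun T η a
      + (eVariationOn η (Icc (min (max a 0) T) (min (max b 0) T))).toReal := by
  have h1 : eVariationOn η (Icc 0 (min (max a 0) T))
      + eVariationOn η (Icc (min (max a 0) T) (min (max b 0) T))
      = eVariationOn η (Icc 0 (min (max b 0) T)) := by
    have := eVariationOn.Icc_add_Icc η (s := univ) (cl_mem hT a).1 (cl_mono hab) (mem_univ _)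
    simpa using this
  have f1 : eVariationOn η (Icc 0 (min (max a 0) T)) ≠ ⊤ :=
    evar_fin hT hbv ⟨le_rfl, hT⟩ (cl_mem hT a)
  have f2 : eVariationOn η (Icc (min (max a 0) T) (min (max b 0) T)) ≠ ⊤ :=
    evar_fin hT hbv (cl_mem hT a) (cl_mem hT b)
  rw [varFun, varFun, ← h1, ENNReal.toReal_add f1 f2]

lemma clamp_dist_le (hT : 0 ≤ T) (hbv : BoundedVariationOn η (Icc 0 T)) {a b : ℝ} (hab : a ≤ b) :
    |clampFun T η b - clampFun T η a|
      ≤ (eVariationOn η (Icc (min (max a 0) T) (min (max b 0) T))).toReal := by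
  have hbv' : BoundedVariationOn η (Icc (min (max a 0) T) (min (max b 0) T)) :=
    ne_top_of_le_ne_top hbv (eVariationOn.mono η (Icc_subset_Icc (cl_mem hT a).1 (cl_mem hT b).2))
  have := hbv'.dist_le (x := min (max b 0) T) (y := min (max a 0) T)
    ⟨cl_mono hab, le_rfl⟩ ⟨le_rfl, cl_mono hab⟩
  simpa [Real.dist_eq, clampFun] using this

lemma gMono (hT : 0 ≤ T) (hbv : BoundedVariationOn η (Icc 0 T)) :
    Monotone (fun u => varFun T η u + clampFun T η u) := by
  intro a b hab
  have h1 := varFun_add hT hbv (η := η) hab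
  have h2 := clamp_dist_le hT hbv (η := η) hab
  have := neg_abs_le (clampFun T η b - clampFun T η a)
  simp only [h1]
  linarith [abs_nonneg (clampFun T η b - clampFun T η a)]

lemma clamp_cont (hT : 0 ≤ T) (hc : ContinuousOn η (Icc 0 T)) :
    Continuous (clampFun T η) :=
  hc.comp_continuous cl_cont (cl_mem hT)

lemma rightLim_g (hT : 0 ≤ T) (hbv : BoundedVariationOn η (Icc 0 T))
    (hc : ContinuousOn η (Icc 0 T)) (u : ℝ) :
    rightLim (fun u => varFun T η u + clampFun T η u) u
      = rightLim (varFun T η) u + clampFun T η u := by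
  refine rightLim_eq_of_tendsto (h := nhdsGT_neBot u) ?_
  exact ((varFun_mono hT hbv).tendsto_rightLim u).add
    (((clamp_cont hT hc).tendsto u).mono_left nhdsWithin_le_nhds)

lemma lsMeasure_Ioc {f : ℝ → ℝ} (hf : Monotone f) (a b : ℝ) :
    lsMeasure f (Ioc a b) = ENNReal.ofReal (rightLim f b - rightLim f a) := by
  rw [lsMeasure, dif_pos hf, StieltjesFunction.measure_Ioc]
  rfl

lemma rv_mono (hT : 0 ≤ T) (hbv : BoundedVariationOn η (Icc 0 T)) :
    Monotone (rightLim (varFun T η)) := (varFun_mono hT hbv).rightLim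

lemma rv_le (hT : 0 ≤ T) (hbv : BoundedVariationOn η (Icc 0 T)) {b : ℝ} (hb : b ≤ T) :
    rightLim (varFun T η) b ≤ (eVariationOn η (Icc 0 T)).toReal := by
  have h1 : rightLim (varFun T η) b ≤ varFun T η (T + 1) :=
    (varFun_mono hT hbv).rightLim_le (by linarith)
  refine h1.trans ?_
  exact varFun_le hT hbv _

lemma rv_nonneg (hT : 0 ≤ T) (hbv : BoundedVariationOn η (Icc 0 T)) (a : ℝ) :
    0 ≤ rightLim (varFun T η) a :=
  le_trans (varFun_nonneg a) ((varFun_mono hT hbv).le_rightLim le_rfl)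

lemma measIoc_m (hT : 0 ≤ T) (hbv : BoundedVariationOn η (Icc 0 T)) {a b : ℝ} (hab : a ≤ b) :
    ((lsMeasure (varFun T η)) (Ioc a b)).toReal
      = rightLim (varFun T η) b - rightLim (varFun T η) a := by
  rw [lsMeasure_Ioc (varFun_mono hT hbv), ENNReal.toReal_ofReal
    (sub_nonneg.2 (rv_mono hT hbv hab))]

lemma measIoc_p (hT : 0 ≤ T) (hbv : BoundedVariationOn η (Icc 0 T))
    (hc : ContinuousOn η (Icc 0 T)) {a b : ℝ} (hab : a ≤ b) :
    ((lsMeasure (fun u => varFun T η u + clampFun T η u)) (Ioc a b)).toReal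
      = (rightLim (varFun T η) b + clampFun T η b)
        - (rightLim (varFun T η) a + clampFun T η a) := by
  rw [lsMeasure_Ioc (gMono hT hbv), rightLim_g hT hbv hc, rightLim_g hT hbv hc,
    ENNReal.toReal_ofReal]
  have := (gMono hT hbv).rightLim hab
  rw [rightLim_g hT hbv hc, rightLim_g hT hbv hc] at this
  linarith

lemma measIoc_fin {f : ℝ → ℝ} (a b : ℝ) : lsMeasure f (Ioc a b) < ⊤ := by
  by_cases hf : Monotone f
  · rw [lsMeasure_Ioc hf]; exact ENNReal.ofReal_lt_top
  · rw [lsMeasure, dif_neg hf]; simp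

end Scalar

section Generic
variable {T : ℝ}

/-- integrability of a function continuous on `Icc 0 T` over an `Ioc` subset. -/
lemma int_on (μ : Measure ℝ) {a b : ℝ} (hfin : μ (Ioc a b) < ⊤) {ψ : ℝ → ℝ}
    (hψ : ContinuousOn ψ (Icc 0 T)) (hsub : Ioc a b ⊆ Icc 0 T) :
    IntegrableOn ψ (Ioc a b) μ := by
  obtain ⟨C, hC⟩ := isCompact_Icc.exists_bound_of_continuousOn hψ
  refine ⟨(hψ.mono hsub).aestronglyMeasurable measurableSet_Ioc, ?_⟩
  exact HasFiniteIntegral.restrict_of_bounded C hfin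
    (ae_restrict_of_forall_mem measurableSet_Ioc fun s hs => hC s (hsub hs))

lemma int_bound (μ : Measure ℝ) {a b : ℝ} (hfin : μ (Ioc a b) < ⊤) {ψ : ℝ → ℝ} {C : ℝ}
    (hmeas : AEStronglyMeasurable ψ (μ.restrict (Ioc a b)))
    (hC : ∀ u ∈ Ioc a b, |ψ u| ≤ C) :
    |∫ s in Ioc a b, ψ s ∂μ| ≤ C * (μ (Ioc a b)).toReal := by
  have := norm_setIntegral_le_of_norm_le_const_ae' (f := ψ) hfin
    (Eventually.of_forall (fun u hu => by simpa using hC u hu))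
  simpa [Measure.real] using this

/-- chunk additivity of the set integral. -/
lemma sum_chunks (μ : Measure ℝ) {f : ℝ → ℝ} (m : ℕ → ℝ) (hm : Monotone m) (K : ℕ)
    (hf : IntegrableOn f (Ioc (m 0) (m K)) μ) :
    ∑ k ∈ Finset.range K, ∫ s in Ioc (m k) (m (k+1)), f s ∂μ
      = ∫ s in Ioc (m 0) (m K), f s ∂μ := by
  induction K with
  | zero => simp
  | succ K ih =>
    have hsub1 : Ioc (m 0) (m K) ⊆ Ioc (m 0) (m (K+1)) :=
      Ioc_subset_Ioc le_rfl (hm (Nat.le_succ K))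
    have hsub2 : Ioc (m K) (m (K+1)) ⊆ Ioc (m 0) (m (K+1)) :=
      Ioc_subset_Ioc (hm (Nat.zero_le K)) le_rfl
    rw [Finset.sum_range_succ, ih (hf.mono_set hsub1)]
    rw [← setIntegral_union (Ioc_disjoint_Ioc_of_le le_rfl) measurableSet_Ioc
      (hf.mono_set hsub1) (hf.mono_set hsub2),
      Ioc_union_Ioc_eq_Ioc (hm (Nat.zero_le K)) (hm (Nat.le_succ K))]

end Generic

section Main
variable {T : ℝ} {η : ℝ → ℝ}

lemma clamp_diff_le (hT : 0 ≤ T) (hbv : BoundedVariationOn η (Icc 0 T)) {a b : ℝ} (hab : a ≤ b) :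
    |clampFun T η b - clampFun T η a| ≤ (eVariationOn η (Icc 0 T)).toReal := by
  refine (clamp_dist_le hT hbv hab).trans ?_
  exact ENNReal.toReal_mono hbv
    (eVariationOn.mono η (Icc_subset_Icc (cl_mem hT a).1 (cl_mem hT b).2))

lemma mup_le (hT : 0 ≤ T) (hbv : BoundedVariationOn η (Icc 0 T))
    (hc : ContinuousOn η (Icc 0 T)) {t : ℝ} (ht : t ∈ Icc 0 T) :
    ((lsMeasure (fun u => varFun T η u + clampFun T η u)) (Ioc 0 t)).toReal
      ≤ 2 * (eVariationOn η (Icc 0 T)).toReal := by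
  rw [measIoc_p hT hbv hc ht.1]
  have h1 : rightLim (varFun T η) t ≤ (eVariationOn η (Icc 0 T)).toReal := rv_le hT hbv ht.2
  have h2 : 0 ≤ rightLim (varFun T η) 0 := rv_nonneg hT hbv 0
  have h3 := clamp_diff_le hT hbv (η := η) ht.1
  have h4 := abs_le.1 h3
  linarith [h4.2]

lemma mum_le (hT : 0 ≤ T) (hbv : BoundedVariationOn η (Icc 0 T)) {t : ℝ} (ht : t ∈ Icc 0 T) :
    ((lsMeasure (varFun T η)) (Ioc 0 t)).toReal ≤ (eVariationOn η (Icc 0 T)).toReal := by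
  rw [measIoc_m hT hbv ht.1]
  have h1 : rightLim (varFun T η) t ≤ (eVariationOn η (Icc 0 T)).toReal := rv_le hT hbv ht.2
  have h2 : 0 ≤ rightLim (varFun T η) 0 := rv_nonneg hT hbv 0
  linarith

lemma Jbound (hT : 0 ≤ T) (hbv : BoundedVariationOn η (Icc 0 T))
    (hc : ContinuousOn η (Icc 0 T)) {ψ : ℝ → ℝ} (hψ : ContinuousOn ψ (Icc 0 T))
    {t : ℝ} (ht : t ∈ Icc 0 T) {C : ℝ} (hC0 : 0 ≤ C) (hC : ∀ u ∈ Icc 0 T, |ψ u| ≤ C) :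
    |stieltjesIntegral1 T ψ η t| ≤ 3 * C * (eVariationOn η (Icc 0 T)).toReal := by
  have hsub : Ioc (0:ℝ) t ⊆ Icc 0 T := Ioc_subset_Icc_self.trans (Icc_subset_Icc le_rfl ht.2)
  have hC' : ∀ u ∈ Ioc (0:ℝ) t, |ψ u| ≤ C := fun u hu => hC u (hsub hu)
  have hmeas : ∀ μ : Measure ℝ, AEStronglyMeasurable ψ (μ.restrict (Ioc 0 t)) :=
    fun μ => (hψ.mono hsub).aestronglyMeasurable measurableSet_Ioc
  have bp := int_bound (lsMeasure (fun u => varFun T η u + clampFun T η u))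
    (measIoc_fin 0 t) (hmeas _) hC'
  have bm := int_bound (lsMeasure (varFun T η)) (measIoc_fin 0 t) (hmeas _) hC'
  have mp := mup_le hT hbv hc ht
  have mm := mum_le hT hbv ht
  have hV : (0:ℝ) ≤ (eVariationOn η (Icc 0 T)).toReal := ENNReal.toReal_nonneg
  rw [stieltjesIntegral1, sub_eq_add_neg]
  refine (abs_add_le _ _).trans ?_
  rw [abs_neg]
  nlinarith [abs_nonneg (∫ s in Ioc 0 t, ψ s ∂(lsMeasure (varFun T η)))]

lemma Jsub (hT : 0 ≤ T) {ψ φ : ℝ → ℝ}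
    (hψ : ContinuousOn ψ (Icc 0 T)) (hφ : ContinuousOn φ (Icc 0 T)) {t : ℝ} (ht : t ∈ Icc 0 T) :
    stieltjesIntegral1 T ψ η t - stieltjesIntegral1 T φ η t
      = stieltjesIntegral1 T (fun u => ψ u - φ u) η t := by
  have hsub : Ioc (0:ℝ) t ⊆ Icc 0 T := Ioc_subset_Icc_self.trans (Icc_subset_Icc le_rfl ht.2)
  rw [stieltjesIntegral1, stieltjesIntegral1, stieltjesIntegral1,
    integral_sub (int_on _ (measIoc_fin 0 t) hψ hsub) (int_on _ (measIoc_fin 0 t) hφ hsub),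
    integral_sub (int_on _ (measIoc_fin 0 t) hψ hsub) (int_on _ (measIoc_fin 0 t) hφ hsub)]
  ring

end Main

section Key
variable {T : ℝ} {η : ℝ → ℝ}

lemma key (hT : 0 < T) (hbv : BoundedVariationOn η (Icc 0 T)) (hc : ContinuousOn η (Icc 0 T))
    {ψ : ℝ → ℝ} (hψ : ContinuousOn ψ (Icc 0 T)) {t : ℝ} (ht : t ∈ Icc 0 T)
    {K : ℕ} (hK : 0 < K) {ε : ℝ} (hε : 0 ≤ ε)
    (hosc : ∀ s u, s ∈ Icc 0 T → u ∈ Icc 0 T → |s - u| ≤ T / K → |ψ s - ψ u| ≤ ε) :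
    |stieltjesIntegral1 T ψ η t -
        ∑ k ∈ Finset.range K, ψ ((k : ℝ) * (T / K)) *
          (clampFun T η (min t (((k : ℝ) + 1) * (T / K)))
            - clampFun T η (min t ((k : ℝ) * (T / K))))|
      ≤ 3 * ε * (eVariationOn η (Icc 0 T)).toReal := by
  set V := (eVariationOn η (Icc 0 T)).toReal with hV_def
  have hV : 0 ≤ V := ENNReal.toReal_nonneg
  set μp := lsMeasure (fun u => varFun T η u + clampFun T η u) with hμp_def
  set μm := lsMeasure (varFun T η) with hμm_def
  set m : ℕ → ℝ := fun k => min t ((k : ℝ) * (T / K)) with hm_def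
  have hTK : 0 ≤ T / K := div_nonneg hT.le (Nat.cast_nonneg K)
  have hmmono : Monotone m := by
    intro i j hij
    exact le_min (min_le_left _ _)
      ((min_le_right _ _).trans (mul_le_mul_of_nonneg_right (Nat.cast_le.2 hij) hTK))
  have hm0 : m 0 = 0 := by simp [hm_def, ht.1]
  have hmK : m K = t := by
    have hKT : (K : ℝ) * (T / K) = T := by
      field_simp
    simp only [hm_def, hKT]
    exact min_eq_left ht.2
  have hmsucc : ∀ k : ℕ, m (k + 1) = min t (((k : ℝ) + 1) * (T / K)) := by
    intro k; simp [hm_def]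
  have hm_nonneg : ∀ k, 0 ≤ m k := fun k => le_min ht.1 (by positivity)
  have hm_le_t : ∀ k, m k ≤ t := fun k => min_le_left _ _
  have hsub : Ioc (0:ℝ) t ⊆ Icc 0 T := Ioc_subset_Icc_self.trans (Icc_subset_Icc le_rfl ht.2)
  have hintp : IntegrableOn ψ (Ioc 0 t) μp := int_on _ (measIoc_fin 0 t) hψ hsub
  have hintm : IntegrableOn ψ (Ioc 0 t) μm := int_on _ (measIoc_fin 0 t) hψ hsub
  have e1 : ∫ s in Ioc 0 t, ψ s ∂μp
      = ∑ k ∈ Finset.range K, ∫ s in Ioc (m k) (m (k+1)), ψ s ∂μp := by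
    rw [sum_chunks μp m hmmono K (by rwa [hm0, hmK]), hm0, hmK]
  have e2 : ∫ s in Ioc 0 t, ψ s ∂μm
      = ∑ k ∈ Finset.range K, ∫ s in Ioc (m k) (m (k+1)), ψ s ∂μm := by
    rw [sum_chunks μm m hmmono K (by rwa [hm0, hmK]), hm0, hmK]
  -- per-chunk estimate
  have main : ∀ k ∈ Finset.range K,
      |(∫ s in Ioc (m k) (m (k+1)), ψ s ∂μp) - (∫ s in Ioc (m k) (m (k+1)), ψ s ∂μm)
          - ψ ((k : ℝ) * (T / K)) * (clampFun T η (m (k+1)) - clampFun T η (m k))|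
        ≤ ε * ((μp (Ioc (m k) (m (k+1)))).toReal + (μm (Ioc (m k) (m (k+1)))).toReal) := by
    intro k hk
    have hkK : (k : ℝ) ≤ K := Nat.cast_le.2 (Finset.mem_range.1 hk).le
    have hab : m k ≤ m (k + 1) := hmmono (Nat.le_succ k)
    set a := m k
    set b := m (k + 1)
    set c := ψ ((k : ℝ) * (T / K)) with hc_def
    have hsubk : Ioc a b ⊆ Ioc 0 t := Ioc_subset_Ioc (hm_nonneg k) (hm_le_t (k+1))
    have hsubk' : Ioc a b ⊆ Icc 0 T := hsubk.trans hsub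
    have hintpk : IntegrableOn ψ (Ioc a b) μp := hintp.mono_set hsubk
    have hintmk : IntegrableOn ψ (Ioc a b) μm := hintm.mono_set hsubk
    have hdiff : (μp (Ioc a b)).toReal - (μm (Ioc a b)).toReal
        = clampFun T η b - clampFun T η a := by
      rw [hμp_def, hμm_def, measIoc_p hT.le hbv hc hab, measIoc_m hT.le hbv hab]; ring
    have hrw : (∫ s in Ioc a b, ψ s ∂μp) - (∫ s in Ioc a b, ψ s ∂μm)
          - c * (clampFun T η b - clampFun T η a)
        = (∫ s in Ioc a b, (ψ s - c) ∂μp) - ∫ s in Ioc a b, (ψ s - c) ∂μm := by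
      rw [integral_sub hintpk (integrableOn_const (measIoc_fin a b).ne),
        integral_sub hintmk (integrableOn_const (measIoc_fin a b).ne),
        setIntegral_const, setIntegral_const, smul_eq_mul, smul_eq_mul, measureReal_def,
          measureReal_def, ← hdiff]
      ring
    rw [hrw]
    -- pointwise oscillation bound on the chunk
    have hpt : ∀ s ∈ Ioc a b, |ψ s - c| ≤ ε := by
      intro s hs
      have hst : s ≤ t := hs.2.trans (hm_le_t (k+1))
      have h1 : (k : ℝ) * (T / K) < s := by
        rcases lt_or_ge ((k : ℝ) * (T / K)) t with h | h
        · have ha_eq : a = (k : ℝ) * (T / K) := min_eq_right h.le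
          exact ha_eq ▸ hs.1
        · have ha_eq : a = t := min_eq_left h
          exact absurd (ha_eq ▸ hs.1) (not_lt.2 hst)
      have h2 : s ≤ ((k : ℝ) + 1) * (T / K) := hs.2.trans (le_of_eq_of_le (hmsucc k) (min_le_right _ _))
      have hsmem : s ∈ Icc 0 T := ⟨le_trans (by positivity) h1.le, hst.trans ht.2⟩
      have htkmem : (k : ℝ) * (T / K) ∈ Icc 0 T := by
        constructor
        · positivity
        · calc (k : ℝ) * (T / K) ≤ (K : ℝ) * (T / K) := by
                exact mul_le_mul_of_nonneg_right hkK hTK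
            _ = T := by field_simp
      refine hosc s _ hsmem htkmem ?_
      rw [abs_le]
      constructor
      · linarith
      · nlinarith
    have hmeask : ∀ μ : Measure ℝ,
        AEStronglyMeasurable (fun s => ψ s - c) (μ.restrict (Ioc a b)) := fun μ =>
      (((hψ.mono hsubk').sub continuousOn_const)).aestronglyMeasurable measurableSet_Ioc
    have bp := int_bound μp (measIoc_fin a b) (hmeask μp) hpt
    have bm := int_bound μm (measIoc_fin a b) (hmeask μm) hpt
    rw [sub_eq_add_neg]
    refine (abs_add_le _ _).trans ?_
    rw [abs_neg]
    linarith
  -- telescoping sums of the chunk measures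
  have tp : ∑ k ∈ Finset.range K, (μp (Ioc (m k) (m (k+1)))).toReal
      = (rightLim (varFun T η) t + clampFun T η t)
        - (rightLim (varFun T η) 0 + clampFun T η 0) := by
    have : ∀ k ∈ Finset.range K, (μp (Ioc (m k) (m (k+1)))).toReal
        = (fun j => rightLim (varFun T η) (m j) + clampFun T η (m j)) (k+1)
          - (fun j => rightLim (varFun T η) (m j) + clampFun T η (m j)) k := by
      intro k _
      rw [hμp_def, measIoc_p hT.le hbv hc (hmmono (Nat.le_succ k))]
    rw [Finset.sum_congr rfl this, Finset.sum_range_sub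
      (fun j => rightLim (varFun T η) (m j) + clampFun T η (m j)), hm0, hmK]
  have tm : ∑ k ∈ Finset.range K, (μm (Ioc (m k) (m (k+1)))).toReal
      = rightLim (varFun T η) t - rightLim (varFun T η) 0 := by
    have : ∀ k ∈ Finset.range K, (μm (Ioc (m k) (m (k+1)))).toReal
        = (fun j => rightLim (varFun T η) (m j)) (k+1)
          - (fun j => rightLim (varFun T η) (m j)) k := by
      intro k _
      rw [hμm_def, measIoc_m hT.le hbv (hmmono (Nat.le_succ k))]
    rw [Finset.sum_congr rfl this, Finset.sum_range_sub
      (fun j => rightLim (varFun T η) (m j)), hm0, hmK]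
  -- put everything together
  have decomp : stieltjesIntegral1 T ψ η t -
      ∑ k ∈ Finset.range K, ψ ((k : ℝ) * (T / K)) *
        (clampFun T η (min t (((k : ℝ) + 1) * (T / K)))
          - clampFun T η (min t ((k : ℝ) * (T / K))))
      = ∑ k ∈ Finset.range K,
        ((∫ s in Ioc (m k) (m (k+1)), ψ s ∂μp) - (∫ s in Ioc (m k) (m (k+1)), ψ s ∂μm)
          - ψ ((k : ℝ) * (T / K)) * (clampFun T η (m (k+1)) - clampFun T η (m k))) := by
    rw [stieltjesIntegral1, ← hμp_def, ← hμm_def, e1, e2, ← Finset.sum_sub_distrib,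
      ← Finset.sum_sub_distrib]
    exact Finset.sum_congr rfl fun k _ => by rw [hmsucc k]
  rw [decomp]
  calc |∑ k ∈ Finset.range K, _| ≤ _ := Finset.abs_sum_le_sum_abs _ _
    _ ≤ ∑ k ∈ Finset.range K,
        ε * ((μp (Ioc (m k) (m (k+1)))).toReal + (μm (Ioc (m k) (m (k+1)))).toReal) :=
      Finset.sum_le_sum main
    _ = ε * ((∑ k ∈ Finset.range K, (μp (Ioc (m k) (m (k+1)))).toReal)
          + ∑ k ∈ Finset.range K, (μm (Ioc (m k) (m (k+1)))).toReal) := by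
      rw [mul_add, Finset.mul_sum, Finset.mul_sum, ← Finset.sum_add_distrib]
      exact Finset.sum_congr rfl fun k _ => by ring
    _ ≤ 3 * ε * V := by
      rw [tp, tm]
      have h1 : rightLim (varFun T η) t ≤ V := rv_le hT.le hbv ht.2
      have h2 : 0 ≤ rightLim (varFun T η) 0 := rv_nonneg hT.le hbv 0
      have h3 := (abs_le.1 (clamp_diff_le hT.le hbv (η := η) ht.1)).2
      nlinarith

end Key

section ScalarFinal

lemma scalar_final {T : ℝ} (hT : 0 < T) (x : ℕ → ℝ → ℝ) (x₀ : ℝ → ℝ)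
    (hxc : ∀ n, ContinuousOn (x n) (Icc 0 T)) (hx₀c : ContinuousOn x₀ (Icc 0 T))
    (hxu : TendstoUniformlyOn x x₀ atTop (Icc 0 T))
    (η : ℕ → ℝ → ℝ) (η₀ : ℝ → ℝ)
    (hηc : ∀ n, ContinuousOn (η n) (Icc 0 T)) (hη₀c : ContinuousOn η₀ (Icc 0 T))
    (hηbv : ∀ n, BoundedVariationOn (η n) (Icc 0 T))
    (hη₀bv : BoundedVariationOn η₀ (Icc 0 T))
    (hηu : TendstoUniformlyOn η η₀ atTop (Icc 0 T))
    (M : ℝ) (hMn : ∀ n, (eVariationOn (η n) (Icc 0 T)).toReal ≤ M)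
    (hM0 : (eVariationOn η₀ (Icc 0 T)).toReal ≤ M) :
    TendstoUniformlyOn (fun n t => stieltjesIntegral1 T (x n) (η n) t)
      (fun t => stieltjesIntegral1 T x₀ η₀ t) atTop (Icc 0 T) := by
  have hMpos : 0 ≤ M := le_trans ENNReal.toReal_nonneg (hMn 0)
  rw [Metric.tendstoUniformlyOn_iff]
  intro ε hε
  -- bound for x₀
  obtain ⟨C, hC⟩ := isCompact_Icc.exists_bound_of_continuousOn hx₀c
  have hC0 : 0 ≤ C := le_trans (norm_nonneg _) (hC 0 ⟨le_rfl, hT.le⟩)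
  -- epsilons
  set ε₁ := ε / (12 * (M + 1)) with hε₁_def
  have hε₁ : 0 < ε₁ := div_pos hε (by linarith)
  set ε₂ := ε / (4 * (3 * M + 1)) with hε₂_def
  have hε₂ : 0 < ε₂ := div_pos hε (by linarith)
  -- uniform continuity of x₀, choice of K
  obtain ⟨δ, hδ, hδε⟩ := Metric.uniformContinuousOn_iff_le.1
    (isCompact_Icc.uniformContinuousOn_of_continuous hx₀c) ε₁ hε₁
  obtain ⟨K, hKgt⟩ := exists_nat_gt (T / δ)
  have hTδ : 0 < T / δ := div_pos hT hδ
  have hKpos : 0 < K := Nat.cast_pos.mp (hTδ.trans hKgt)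
  have hK' : (0:ℝ) < K := Nat.cast_pos.mpr hKpos
  have hTK : T / K < δ := by
    rw [div_lt_iff₀ hK']
    rw [div_lt_iff₀ hδ] at hKgt
    linarith
  have hosc : ∀ s u, s ∈ Icc 0 T → u ∈ Icc 0 T → |s - u| ≤ T / K → |x₀ s - x₀ u| ≤ ε₁ := by
    intro s u hs hu hd
    have := hδε s hs u hu (by rw [Real.dist_eq]; exact hd.trans hTK.le)
    rwa [Real.dist_eq] at this
  set ε₃ := ε / (4 * (2 * K * C + 1)) with hε₃_def
  have hKC : (0:ℝ) ≤ 2 * K * C := by positivity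
  have hε₃ : 0 < ε₃ := div_pos hε (by linarith)
  filter_upwards [Metric.tendstoUniformlyOn_iff.1 hxu ε₂ hε₂,
    Metric.tendstoUniformlyOn_iff.1 hηu ε₃ hε₃] with n hxn hηn
  intro t ht
  have hxbnd : ∀ u ∈ Icc 0 T, |x₀ u - x n u| ≤ ε₂ := fun u hu =>
    le_of_lt (by simpa [Real.dist_eq] using hxn u hu)
  have hηbnd : ∀ u ∈ Icc 0 T, |η₀ u - η n u| ≤ ε₃ := fun u hu =>
    le_of_lt (by simpa [Real.dist_eq] using hηn u hu)
  -- the four pieces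
  set S₀ := ∑ k ∈ Finset.range K, x₀ ((k : ℝ) * (T / K)) *
      (clampFun T η₀ (min t (((k : ℝ) + 1) * (T / K)))
        - clampFun T η₀ (min t ((k : ℝ) * (T / K)))) with hS₀_def
  set Sn := ∑ k ∈ Finset.range K, x₀ ((k : ℝ) * (T / K)) *
      (clampFun T (η n) (min t (((k : ℝ) + 1) * (T / K)))
        - clampFun T (η n) (min t ((k : ℝ) * (T / K)))) with hSn_def
  have hoscC : ∀ s u, s ∈ Icc 0 T → u ∈ Icc 0 T → |s - u| ≤ T / K → |x₀ s - x₀ u| ≤ ε₁ := hosc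
  have t2 : |stieltjesIntegral1 T x₀ η₀ t - S₀| ≤ 3 * ε₁ * M := by
    refine (key hT hη₀bv hη₀c hx₀c ht hKpos hε₁.le hosc).trans ?_
    nlinarith only [mul_nonneg hε₁.le (sub_nonneg.2 hM0), hε₁]
  have t4 : |stieltjesIntegral1 T x₀ (η n) t - Sn| ≤ 3 * ε₁ * M := by
    refine (key hT (hηbv n) (hηc n) hx₀c ht hKpos hε₁.le hosc).trans ?_
    nlinarith only [mul_nonneg hε₁.le (sub_nonneg.2 (hMn n)), hε₁]
  have t1 : |stieltjesIntegral1 T x₀ (η n) t - stieltjesIntegral1 T (x n) (η n) t|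
      ≤ 3 * ε₂ * M := by
    rw [Jsub hT.le hx₀c (hxc n) ht]
    refine (Jbound hT.le (hηbv n) (hηc n) (hx₀c.sub (hxc n)) ht hε₂.le hxbnd).trans ?_
    nlinarith only [mul_nonneg hε₂.le (sub_nonneg.2 (hMn n)), hε₂]
  have t3 : |S₀ - Sn| ≤ (K : ℝ) * (C * (2 * ε₃)) := by
    rw [hS₀_def, hSn_def, ← Finset.sum_sub_distrib]
    refine (Finset.abs_sum_le_sum_abs _ _).trans ?_
    have per : ∀ k ∈ Finset.range K,
        |x₀ ((k : ℝ) * (T / K)) *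
            (clampFun T η₀ (min t (((k : ℝ) + 1) * (T / K)))
              - clampFun T η₀ (min t ((k : ℝ) * (T / K))))
          - x₀ ((k : ℝ) * (T / K)) *
            (clampFun T (η n) (min t (((k : ℝ) + 1) * (T / K)))
              - clampFun T (η n) (min t ((k : ℝ) * (T / K))))|
        ≤ C * (2 * ε₃) := by
      intro k hk
      have hTKnn : 0 ≤ T / K := div_nonneg hT.le (Nat.cast_nonneg K)
      have hukmem : (k : ℝ) * (T / K) ∈ Icc 0 T := by
        constructor
        · positivity
        · calc (k : ℝ) * (T / K) ≤ (K : ℝ) * (T / K) :=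
              mul_le_mul_of_nonneg_right (Nat.cast_le.2 (Finset.mem_range.1 hk).le) hTKnn
            _ = T := by field_simp
      have hclamp : ∀ r : ℝ, |clampFun T η₀ r - clampFun T (η n) r| ≤ ε₃ := by
        intro r
        exact hηbnd _ (cl_mem hT.le r)
      rw [← mul_sub, abs_mul]
      have h1 := hclamp (min t (((k : ℝ) + 1) * (T / K)))
      have h2 := hclamp (min t ((k : ℝ) * (T / K)))
      have hx0k : |x₀ ((k : ℝ) * (T / K))| ≤ C := by
        have := hC _ hukmem; simpa using this
      have habs : |(clampFun T η₀ (min t (((k : ℝ) + 1) * (T / K)))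
            - clampFun T η₀ (min t ((k : ℝ) * (T / K))))
          - (clampFun T (η n) (min t (((k : ℝ) + 1) * (T / K)))
            - clampFun T (η n) (min t ((k : ℝ) * (T / K))))| ≤ 2 * ε₃ := by
        have e : (clampFun T η₀ (min t (((k : ℝ) + 1) * (T / K)))
              - clampFun T η₀ (min t ((k : ℝ) * (T / K))))
            - (clampFun T (η n) (min t (((k : ℝ) + 1) * (T / K)))
              - clampFun T (η n) (min t ((k : ℝ) * (T / K))))
            = (clampFun T η₀ (min t (((k : ℝ) + 1) * (T / K)))
              - clampFun T (η n) (min t (((k : ℝ) + 1) * (T / K))))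
            - (clampFun T η₀ (min t ((k : ℝ) * (T / K)))
              - clampFun T (η n) (min t ((k : ℝ) * (T / K)))) := by ring
        rw [e, sub_eq_add_neg]
        refine (abs_add_le _ _).trans ?_
        rw [abs_neg]; linarith
      exact mul_le_mul hx0k habs (abs_nonneg _) hC0
    refine (Finset.sum_le_sum per).trans ?_
    rw [Finset.sum_const, Finset.card_range, nsmul_eq_mul]
  -- assemble
  have decomp : stieltjesIntegral1 T x₀ η₀ t - stieltjesIntegral1 T (x n) (η n) t
      = (stieltjesIntegral1 T x₀ η₀ t - S₀) + (S₀ - Sn)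
        + (Sn - stieltjesIntegral1 T x₀ (η n) t)
        + (stieltjesIntegral1 T x₀ (η n) t - stieltjesIntegral1 T (x n) (η n) t) := by ring
  have habs4 : |stieltjesIntegral1 T x₀ η₀ t - stieltjesIntegral1 T (x n) (η n) t|
      ≤ 3 * ε₁ * M + (K : ℝ) * (C * (2 * ε₃)) + 3 * ε₁ * M + 3 * ε₂ * M := by
    rw [decomp]
    have a1 := abs_add_le (stieltjesIntegral1 T x₀ η₀ t - S₀ + (S₀ - Sn)
      + (Sn - stieltjesIntegral1 T x₀ (η n) t))
      (stieltjesIntegral1 T x₀ (η n) t - stieltjesIntegral1 T (x n) (η n) t)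
    have a2 := abs_add_le (stieltjesIntegral1 T x₀ η₀ t - S₀ + (S₀ - Sn))
      (Sn - stieltjesIntegral1 T x₀ (η n) t)
    have a3 := abs_add_le (stieltjesIntegral1 T x₀ η₀ t - S₀) (S₀ - Sn)
    have t4' : |Sn - stieltjesIntegral1 T x₀ (η n) t| ≤ 3 * ε₁ * M := by
      rw [abs_sub_comm]; exact t4
    linarith
  rw [Real.dist_eq]
  refine habs4.trans_lt ?_
  -- numeric: 6 ε₁ M + 2 K C ε₃ + 3 ε₂ M < ε
  have n1 : 3 * ε₁ * M + 3 * ε₁ * M < ε / 2 := by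
    have h12 : (0:ℝ) < 12 * (M + 1) := by linarith
    have e1 : ε₁ * (12 * (M + 1)) = ε := div_mul_cancel₀ ε h12.ne'
    nlinarith only [e1, hε₁]
  have n2 : (K : ℝ) * (C * (2 * ε₃)) < ε / 4 := by
    have h4 : (0:ℝ) < 4 * (2 * K * C + 1) := by linarith
    have e3 : ε₃ * (4 * (2 * K * C + 1)) = ε := div_mul_cancel₀ ε h4.ne'
    nlinarith only [e3, hε₃]
  have n3 : 3 * ε₂ * M < ε / 4 := by
    have h4 : (0:ℝ) < 4 * (3 * M + 1) := by linarith
    have e2 : ε₂ * (4 * (3 * M + 1)) = ε := div_mul_cancel₀ ε h4.ne'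
    nlinarith only [e2, hε₂]
  linarith

end ScalarFinal

section Vector

lemma coord_dist_le {d : ℕ} (a b : EuclideanSpace ℝ (Fin d)) (i : Fin d) :
    dist (a i) (b i) ≤ dist a b := by
  rw [EuclideanSpace.dist_eq]
  rw [show dist (a i) (b i) = Real.sqrt ((dist (a i) (b i))^2) from
    (Real.sqrt_sq dist_nonneg).symm]
  apply Real.sqrt_le_sqrt
  exact Finset.single_le_sum (f := fun j => dist (a j) (b j) ^ 2) (fun j _ => sq_nonneg _)
    (Finset.mem_univ i)

lemma coord_lip {d : ℕ} (i : Fin d) :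
    LipschitzWith 1 (fun v : EuclideanSpace ℝ (Fin d) => v i) :=
  LipschitzWith.of_dist_le_mul (fun a b => by simpa using coord_dist_le a b i)

lemma coord_evar_le {d : ℕ} (f : ℝ → EuclideanSpace ℝ (Fin d)) (i : Fin d) (s : Set ℝ) :
    eVariationOn (fun u => f u i) s ≤ eVariationOn f s := by
  have := (coord_lip i).lipschitzOnWith (s := univ) |>.comp_eVariationOn_le
    (mapsTo_univ f s)
  simpa [Function.comp_def] using this

lemma coord_tuo {d : ℕ} {F : ℕ → ℝ → EuclideanSpace ℝ (Fin d)}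
    {f : ℝ → EuclideanSpace ℝ (Fin d)} {s : Set ℝ}
    (h : TendstoUniformlyOn F f atTop s) (i : Fin d) :
    TendstoUniformlyOn (fun n t => F n t i) (fun t => f t i) atTop s := by
  rw [Metric.tendstoUniformlyOn_iff] at h ⊢
  intro ε hε
  filter_upwards [h ε hε] with n hn t ht
  exact lt_of_le_of_lt (coord_dist_le (f t) (F n t) i) (hn t ht)

lemma tuo_sum {d : ℕ} (F : Fin d → ℕ → ℝ → ℝ) (f : Fin d → ℝ → ℝ) (S : Set ℝ)
    (h : ∀ i, TendstoUniformlyOn (F i) (f i) atTop S) :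
    TendstoUniformlyOn (fun n t => ∑ i, F i n t) (fun t => ∑ i, f i t) atTop S := by
  rw [Metric.tendstoUniformlyOn_iff]
  intro ε hε
  have hd1 : (0:ℝ) < (d : ℝ) + 1 := by positivity
  have hε' : 0 < ε / ((d : ℝ) + 1) := by positivity
  have H : ∀ᶠ n in atTop, ∀ i : Fin d, ∀ t ∈ S, dist (f i t) (F i n t) < ε / ((d : ℝ) + 1) :=
    eventually_all.2 fun i => Metric.tendstoUniformlyOn_iff.1 (h i) _ hε'
  filter_upwards [H] with n hn t ht
  calc dist (∑ i, f i t) (∑ i, F i n t)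
      ≤ ∑ _i : Fin d, ε / ((d : ℝ) + 1) :=
        dist_sum_sum_le_of_le _ (fun i _ => (hn i t ht).le)
    _ = (d : ℝ) * (ε / ((d : ℝ) + 1)) := by
        rw [Finset.sum_const, Finset.card_univ, Fintype.card_fin, nsmul_eq_mul]
    _ < ε := by
        rw [mul_div_assoc']
        rw [div_lt_iff₀ hd1]
        nlinarith


/-- If `xₙ → x` uniformly on `[0,T]` (continuous), `ηₙ → η` uniformly on
`[0,T]` with `ηₙ` continuous of bounded variation and `M := sup_n ‖ηₙ‖_BV < ∞`, then
`t ↦ ∫_0^t ⟨xₙ(s), dηₙ(s)⟩` converges uniformly on `[0,T]` to `t ↦ ∫_0^t ⟨x(s), dη(s)⟩`. -/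
theorem stmt2 {d : ℕ} (T : ℝ) (hT : 0 < T)
    (x : ℕ → ℝ → EuclideanSpace ℝ (Fin d)) (x₀ : ℝ → EuclideanSpace ℝ (Fin d))
    (hxc : ∀ n, ContinuousOn (x n) (Icc 0 T)) (hx₀c : ContinuousOn x₀ (Icc 0 T))
    (hxu : TendstoUniformlyOn x x₀ atTop (Icc 0 T))
    (η : ℕ → ℝ → EuclideanSpace ℝ (Fin d)) (η₀ : ℝ → EuclideanSpace ℝ (Fin d))
    (hηc : ∀ n, ContinuousOn (η n) (Icc 0 T))
    (hηbv : ∀ n, BoundedVariationOn (η n) (Icc 0 T))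
    (hηu : TendstoUniformlyOn η η₀ atTop (Icc 0 T))
    (M : ℝ) (hM : ∀ n, bvNorm T (η n) ≤ M) :
    TendstoUniformlyOn (fun n t => stieltjesIntegral T (x n) (η n) t)
      (fun t => stieltjesIntegral T x₀ η₀ t) atTop (Icc 0 T) := by
  have hVn : ∀ n, (eVariationOn (η n) (Icc 0 T)).toReal ≤ M := fun n => by
    have := hM n; rw [bvNorm] at this; linarith [norm_nonneg (η n 0)]
  have hMnn : 0 ≤ M := le_trans ENNReal.toReal_nonneg (hVn 0)
  have hVnE : ∀ n, eVariationOn (η n) (Icc 0 T) ≤ ENNReal.ofReal M := fun n => by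
    rw [← ENNReal.ofReal_toReal (hηbv n)]; exact ENNReal.ofReal_le_ofReal (hVn n)
  have hη₀E : eVariationOn η₀ (Icc 0 T) ≤ ENNReal.ofReal M := by
    by_contra h
    push_neg at h
    obtain ⟨n, hn⟩ := (eVariationOn.lowerSemicontinuous_aux
      (fun u hu => hηu.tendsto_at hu) h).exists
    exact absurd (hVnE n) (not_le.2 hn)
  have hη₀bv : BoundedVariationOn η₀ (Icc 0 T) :=
    ne_top_of_le_ne_top ENNReal.ofReal_ne_top hη₀E
  have hη₀c : ContinuousOn η₀ (Icc 0 T) := hηu.continuousOn (Frequently.of_forall hηc)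
  unfold stieltjesIntegral
  apply tuo_sum
  intro i
  apply scalar_final hT (fun n s => x n s i) (fun s => x₀ s i)
    (fun n => (coord_lip i).continuous.comp_continuousOn (hxc n))
    ((coord_lip i).continuous.comp_continuousOn hx₀c)
    (coord_tuo hxu i)
    (fun n s => η n s i) (fun s => η₀ s i)
    (fun n => (coord_lip i).continuous.comp_continuousOn (hηc n))
    ((coord_lip i).continuous.comp_continuousOn hη₀c)
    (fun n => ne_top_of_le_ne_top (hηbv n) (coord_evar_le (η n) i _))
    (ne_top_of_le_ne_top hη₀bv (coord_evar_le η₀ i _))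
    (coord_tuo hηu i) M
    (fun n => le_trans (ENNReal.toReal_mono (hηbv n) (coord_evar_le (η n) i _)) (hVn n))
    (le_trans (ENNReal.toReal_mono ENNReal.ofReal_ne_top
      (le_trans (coord_evar_le η₀ i _) hη₀E)) (le_of_eq (ENNReal.toReal_ofReal hMnn)))

end Vector

end
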